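/- Let g ≥ 2 be an even integer. Let D_{2g} be the dihedral group of order 4g with rotation ρ of order 2g and reflection z (Mathlib's DihedralGroup (2g)), and let φ be the involutive automorphism of D_{2g} given by φ(ρ) = ρ⁻¹ and φ(z) = ρ^{g−1}z. Then the semidirect product D_{2g} ⋊_φ C₂ (of order 8g) is isomorphic to the dihedral group of order 8g (Mathlib's DihedralGroup (4g)). -/

import Mathlib

namespace SdpDihedralAux

open DihedralGroup

variable (g : ℕ)

/-- The "doubling" map `ZMod (2g) → ZMod (4g)`. -/
def e (k : ZMod (2*g)) : ZMod (4*g) := 2 * ((k.val : ℕ) : ZMod (4*g))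

lemma key (x : ℕ) : (2 * ((x % (2*g) : ℕ) : ZMod (4*g))) = 2 * (x : ZMod (4*g)) := by
  conv_rhs => rw [← Nat.mod_add_div x (2*g)]
  have h0 : ((4*g : ℕ) : ZMod (4*g)) = 0 := ZMod.natCast_self _
  push_cast at h0 ⊢
  linear_combination (-(↑(x / (2*g)) : ZMod (4*g))) * h0

lemma e_natCast (j : ℕ) : e g ((j : ℕ) : ZMod (2*g)) = ((2*j : ℕ) : ZMod (4*g)) := by
  by_cases hgz : g = 0
  · subst hgz; simp [e]
  · have : NeZero (2*g) := ⟨by omega⟩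
    rw [e, ZMod.val_natCast, key]
    push_cast; ring

lemma e_add (hgz : g ≠ 0) (i j : ZMod (2*g)) : e g (i + j) = e g i + e g j := by
  have : NeZero (2*g) := ⟨by omega⟩
  rw [e, ZMod.val_add, key, e, e]
  push_cast; ring

lemma e_sub (hgz : g ≠ 0) (i j : ZMod (2*g)) : e g (i - j) = e g i - e g j := by
  have := e_add g hgz (i - j) j
  rw [sub_add_cancel] at this
  exact eq_sub_of_add_eq this.symm

end SdpDihedralAux

namespace SdpDihedralAux2

open DihedralGroup SdpDihedralAux

variable (g : ℕ)

lemma e_zero : e g 0 = 0 := by simpa using e_natCast g 0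

lemma e_neg (hgz : g ≠ 0) (k : ZMod (2*g)) : e g (-k) = - e g k := by
  have := e_sub g hgz 0 k
  simpa [e_zero] using this

lemma e_one : e g 1 = 2 := by
  have := e_natCast g 1
  push_cast at this
  simpa using this

lemma e_gg : e g ((g : ℕ) : ZMod (2*g)) = 2 * ((g : ℕ) : ZMod (4*g)) := by
  have := e_natCast g g
  push_cast at this
  exact this

/-- The embedding `D_{2g} →* D_{4g}` doubling rotation indices. -/
def f1 (hgz : g ≠ 0) : DihedralGroup (2*g) →* DihedralGroup (4*g) where
  toFun x := match x with
    | .r k => .r (e g k)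
    | .sr k => .sr (e g k)
  map_one' := by
    show DihedralGroup.r (e g 0) = 1
    rw [e_zero, one_def]
  map_mul' x y := by
    cases x <;> cases y <;>
      simp only [r_mul_r, r_mul_sr, sr_mul_r, sr_mul_sr, e_add g hgz, e_sub g hgz]

@[simp] lemma f1_r (hgz : g ≠ 0) (k : ZMod (2*g)) :
    f1 g hgz (DihedralGroup.r k) = DihedralGroup.r (e g k) := rfl

@[simp] lemma f1_sr (hgz : g ≠ 0) (k : ZMod (2*g)) :
    f1 g hgz (DihedralGroup.sr k) = DihedralGroup.sr (e g k) := rfl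

lemma zmod2_cases : ∀ c : ZMod 2, c = 0 ∨ c = 1 := by decide

/-- The map `C₂ →* D_{4g}` sending the generator to `sr (1-g)`. -/
def f2 : Multiplicative (ZMod 2) →* DihedralGroup (4*g) where
  toFun c := if (Multiplicative.toAdd c) = 0 then 1
    else DihedralGroup.sr (1 - ((g : ℕ) : ZMod (4*g)))
  map_one' := by simp
  map_mul' x y := by
    rcases zmod2_cases (Multiplicative.toAdd x) with hx | hx <;>
      rcases zmod2_cases (Multiplicative.toAdd y) with hy | hy <;>
      · have h2 : (1 + 1 : ZMod 2) = 0 := by decide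
        have h1 : (1 : ZMod 2) ≠ 0 := by decide
        simp only [toAdd_mul, hx, hy, add_zero, zero_add, h2]
        simp [h1, sr_mul_sr]

lemma f2_one : f2 g 1 = 1 := by simp [f2]

lemma f2_gen : f2 g (Multiplicative.ofAdd 1) =
    DihedralGroup.sr (1 - ((g : ℕ) : ZMod (4*g))) := by simp [f2]

end SdpDihedralAux2

open SdpDihedralAux SdpDihedralAux2 DihedralGroup SemidirectProduct

/-- Let `g ≥ 2` be even, let `φ` be the involutive automorphism of `DihedralGroup (2g)` given by
`φ(ρ^k) = ρ^{−k}`, `φ(ρ^k z) = ρ^{g−1−k} z` (where `ρ = r 1`, `z = sr 0`), and let `ψ` be the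
corresponding homomorphism `C₂ →* Aut(D_{2g})`. Then the semidirect product `D_{2g} ⋊[ψ] C₂`
(of order `8g`) is isomorphic to the dihedral group of order `8g`. -/
theorem semidirect_product_is_dihedral_of_even
    (g : ℕ) (hg : 2 ≤ g) (hgeven : Even g)
    (φ : DihedralGroup (2 * g) ≃* DihedralGroup (2 * g))
    (hφr : ∀ k : ZMod (2 * g), φ (DihedralGroup.r k) = DihedralGroup.r (-k))
    (hφs : ∀ k : ZMod (2 * g), φ (DihedralGroup.r k * DihedralGroup.sr 0) =
      DihedralGroup.r ((g : ZMod (2 * g)) - 1 - k) * DihedralGroup.sr 0)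
    (ψ : Multiplicative (ZMod 2) →* MulAut (DihedralGroup (2 * g)))
    (hψ : ψ (Multiplicative.ofAdd 1) = φ) :
    Nonempty ((DihedralGroup (2 * g) ⋊[ψ] Multiplicative (ZMod 2)) ≃* DihedralGroup (4 * g)) := by
  classical
  have hgz : g ≠ 0 := by omega
  haveI : NeZero (2 * g) := ⟨by omega⟩
  haveI : NeZero (4 * g) := ⟨by omega⟩
  -- the action of φ on reflections
  have hφsr : ∀ j : ZMod (2 * g), φ (DihedralGroup.sr j) =
      DihedralGroup.sr (1 - ((g : ℕ) : ZMod (2 * g)) - j) := by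
    intro j
    have h1 : DihedralGroup.r (-j) * DihedralGroup.sr 0 = DihedralGroup.sr j := by
      rw [r_mul_sr]; congr 1; ring
    have h2 := hφs (-j)
    rw [h1, r_mul_sr] at h2
    rw [h2]; congr 1; ring
  -- compatibility of f1, f2 with ψ
  have hcomp : ∀ c : Multiplicative (ZMod 2),
      (f1 g hgz).comp ((ψ c) : DihedralGroup (2*g) ≃* DihedralGroup (2*g)).toMonoidHom =
        (MulAut.conj ((f2 g) c)).toMonoidHom.comp (f1 g hgz) := by
    intro c
    rcases zmod2_cases (Multiplicative.toAdd c) with hc | hc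
    · have hc1 : c = 1 := by
        have : Multiplicative.toAdd c = Multiplicative.toAdd 1 := by simpa using hc
        exact Multiplicative.toAdd.injective this
      subst hc1
      refine DFunLike.ext _ _ fun x => ?_
      simp [f2_one]
    · have hc1 : c = Multiplicative.ofAdd 1 := by
        have : Multiplicative.toAdd c = Multiplicative.toAdd (Multiplicative.ofAdd 1) := by
          simpa using hc
        exact Multiplicative.toAdd.injective this
      subst hc1
      refine DFunLike.ext _ _ fun x => ?_
      simp only [MonoidHom.comp_apply, MulEquiv.coe_toMonoidHom, MulAut.conj_apply, hψ, f2_gen]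
      have hsrinv : ∀ t : ZMod (4*g),
          (DihedralGroup.sr t)⁻¹ = DihedralGroup.sr t := fun _ => rfl
      cases x with
      | r k =>
        rw [hφr k, f1_r, f1_r, hsrinv, sr_mul_r, sr_mul_sr, e_neg g hgz]
        congr 1; ring
      | sr k =>
        rw [hφsr k, f1_sr, f1_sr, hsrinv, sr_mul_sr, r_mul_sr,
          e_sub g hgz, e_sub g hgz, e_one, e_gg]
        congr 1; ring
  set F := SemidirectProduct.lift (f1 g hgz) (f2 g) hcomp with hFdef
  have hF : ∀ (n : DihedralGroup (2*g)) (c : Multiplicative (ZMod 2)),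
      F ⟨n, c⟩ = f1 g hgz n * f2 g c := by
    intro n c
    rw [mk_eq_inl_mul_inr, map_mul, lift_inl, lift_inr]
  -- every residue mod 4g is covered
  have hm' : ∀ m : ZMod (4*g), ((m.val : ℕ) : ZMod (4*g)) = m := fun m => by
    simp [ZMod.natCast_val, ZMod.cast_id]
  have hcover : ∀ m : ZMod (4*g), (∃ k, e g k = m) ∨
      (∃ k, 1 - ((g : ℕ) : ZMod (4*g)) - e g k = m) := by
    intro m
    have hml : m.val < 4*g := ZMod.val_lt m
    rcases Nat.even_or_odd m.val with he | ho
    · obtain ⟨j, hj⟩ := he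
      left
      refine ⟨((j : ℕ) : ZMod (2*g)), ?_⟩
      rw [e_natCast]
      have h2j : 2*j = m.val := by omega
      rw [h2j, hm']
    · right
      obtain ⟨a, ha⟩ := hgeven
      obtain ⟨b, hb⟩ := ho
      obtain ⟨j, hj⟩ : ∃ j, 2*j = 3*g + 1 + (4*g - m.val) := ⟨(3*g + 1 + (4*g - m.val))/2, by omega⟩
      refine ⟨((j : ℕ) : ZMod (2*g)), ?_⟩
      rw [e_natCast, hj]
      have h0 : ((4*g : ℕ) : ZMod (4*g)) = 0 := ZMod.natCast_self _
      have hm := hm' m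
      push_cast [Nat.cast_sub hml.le] at h0 hm ⊢
      linear_combination hm - 2 * h0
  -- surjectivity
  have hsur : Function.Surjective F := by
    rintro (m | m)
    · rcases hcover m with ⟨k, hk⟩ | ⟨k, hk⟩
      · exact ⟨⟨DihedralGroup.r k, 1⟩, by rw [hF, f1_r, f2_one, mul_one, hk]⟩
      · refine ⟨⟨DihedralGroup.sr k, Multiplicative.ofAdd 1⟩, ?_⟩
        rw [hF, f1_sr, f2_gen, sr_mul_sr, ← hk]
    · rcases hcover m with ⟨k, hk⟩ | ⟨k, hk⟩
      · exact ⟨⟨DihedralGroup.sr k, 1⟩, by rw [hF, f1_sr, f2_one, mul_one, hk]⟩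
      · refine ⟨⟨DihedralGroup.r k, Multiplicative.ofAdd 1⟩, ?_⟩
        rw [hF, f1_r, f2_gen, r_mul_sr, ← hk]
  -- cardinality
  let eqv : (DihedralGroup (2*g) × Multiplicative (ZMod 2)) ≃
      (DihedralGroup (2 * g) ⋊[ψ] Multiplicative (ZMod 2)) :=
    { toFun := fun p => ⟨p.1, p.2⟩
      invFun := fun x => (x.left, x.right)
      left_inv := fun p => rfl
      right_inv := fun x => rfl }
  haveI : Fintype (DihedralGroup (2 * g) ⋊[ψ] Multiplicative (ZMod 2)) :=
    Fintype.ofEquiv _ eqv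
  have hcard : Fintype.card (DihedralGroup (2 * g) ⋊[ψ] Multiplicative (ZMod 2)) =
      Fintype.card (DihedralGroup (4 * g)) := by
    rw [Fintype.card_congr eqv.symm, Fintype.card_prod, DihedralGroup.card,
      DihedralGroup.card]
    have : Fintype.card (Multiplicative (ZMod 2)) = 2 := by
      rw [Fintype.card_multiplicative, ZMod.card]
    rw [this]; ring
  exact ⟨MulEquiv.ofBijective F ((Fintype.bijective_iff_surjective_and_card F).2 ⟨hsur, hcard⟩)⟩
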